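/- Assume each column Xⱼ of X ∈ ℝ^{n×p} satisfies ‖Xⱼ‖₂² = n, that p ≥ 2, that ε ∈ ℝⁿ has independent N(0, σ²) coordinates for some σ > 0, and that y = Xβ* + ε. With λ = 4σ·√(log p / n), let β̂_λ be any minimizer over β ∈ ℝᵖ of the lasso objective (1/n)·‖y − Xβ‖₂² + 2λ·‖β‖₁, and let σ̂²_naive = (1/n)·‖y − Xβ̂_λ‖₂². Then with probability at least 1 − 1/p, |σ̂²_naive − (1/n)·‖ε‖₂²| ≤ 16·σ·‖β*‖₁·√(log p / n). -/

import Mathlib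

open MeasureTheory ProbabilityTheory Matrix
open scoped ENNReal NNReal

noncomputable section

/-- squared Euclidean norm on ℝⁿ -/
def l2sq {n : ℕ} (v : Fin n → ℝ) : ℝ := ∑ i, (v i) ^ 2

/-- ℓ₁ norm on ℝᵖ -/
def l1 {p : ℕ} (b : Fin p → ℝ) : ℝ := ∑ j, |b j|

/-- sup norm on ℝᵖ -/
def linf {p : ℕ} (v : Fin p → ℝ) : ℝ := ⨆ j, |v j|

/- ### Auxiliary lemmas -/

lemma lintegral_pi_prod : ∀ {n : ℕ} (μ : Fin n → Measure ℝ) [∀ i, SigmaFinite (μ i)]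
    (f : Fin n → ℝ → ℝ≥0∞) (_hf : ∀ i, Measurable (f i)),
    ∫⁻ x, ∏ i, f i (x i) ∂(Measure.pi μ) = ∏ i, ∫⁻ y, f i y ∂(μ i) := by
  intro n
  induction n with
  | zero =>
    intro μ _ f hf
    simp [Measure.pi_of_empty]
  | succ m ih =>
    intro μ _ f hf
    have A := (measurePreserving_piFinSuccAbove μ 0).map_eq
    have key : ∫⁻ x, ∏ i, f i (x i) ∂(Measure.pi μ)
        = ∫⁻ z : ℝ × (Fin m → ℝ), f 0 z.1 * ∏ j : Fin m, f (Fin.succ j) (z.2 j)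
            ∂((μ 0).prod (Measure.pi fun j => μ ((0 : Fin (m+1)).succAbove j))) := by
      rw [← A, lintegral_map_equiv]
      congr 1
      ext x
      rw [Fin.prod_univ_succ]
      simp [MeasurableEquiv.piFinSuccAbove, Fin.zero_succAbove, Fin.tail]
    have hg : Measurable (fun w : Fin m → ℝ => ∏ j, f (Fin.succ j) (w j)) :=
      Finset.measurable_prod _ fun j _ => (hf _).comp (measurable_pi_apply j)
    rw [key, lintegral_prod_mul (hf 0).aemeasurable hg.aemeasurable]
    have : (Measure.pi fun j : Fin m => μ ((0 : Fin (m+1)).succAbove j))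
        = Measure.pi fun j : Fin m => μ (Fin.succ j) := by
      simp [Fin.zero_succAbove]
    rw [this, ih _ _ (fun j => hf _), Fin.prod_univ_succ]

lemma pi_gauss_eq {n : ℕ} (m : Fin n → ℝ) (ν : ℝ≥0) (hν : ν ≠ 0) :
    Measure.pi (fun i => gaussianReal (m i) ν)
      = (Measure.pi fun _ : Fin n => (volume : Measure ℝ)).withDensity
          (fun x => ∏ i, gaussianPDF (m i) ν (x i)) := by
  refine Measure.pi_eq fun s hs => ?_
  rw [withDensity_apply _ (MeasurableSet.univ_pi hs),
    ← lintegral_indicator (MeasurableSet.univ_pi hs)]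
  have : ∀ x, (Set.univ.pi s).indicator (fun x => ∏ i, gaussianPDF (m i) ν (x i)) x
      = ∏ i, (s i).indicator (gaussianPDF (m i) ν) (x i) := by
    intro x
    by_cases hx : x ∈ Set.univ.pi s
    · rw [Set.indicator_of_mem hx]
      refine Finset.prod_congr rfl fun i _ => ?_
      rw [Set.indicator_of_mem (hx i (Set.mem_univ i))]
    · rw [Set.indicator_of_notMem hx]
      rw [Set.mem_pi] at hx
      push_neg at hx
      obtain ⟨i, -, hi⟩ := hx
      exact (Finset.prod_eq_zero (Finset.mem_univ i) (by rw [Set.indicator_of_notMem hi])).symm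
  simp_rw [this]
  rw [lintegral_pi_prod _ _ (fun i => (measurable_gaussianPDF _ _).indicator (hs i))]
  refine Finset.prod_congr rfl fun i _ => ?_
  rw [lintegral_indicator (hs i) _, gaussianReal_apply _ hν]

lemma gaussianPDFReal_tilt (ν : ℝ≥0) (hν : ν ≠ 0) (m z : ℝ) :
    gaussianPDFReal 0 ν z
      = Real.exp ((m^2 - 2*m*z)/(2*ν)) * gaussianPDFReal m ν z := by
  have hν' : (0:ℝ) < ν := lt_of_le_of_ne ν.2 (by exact_mod_cast hν.symm)
  rw [gaussianPDFReal, gaussianPDFReal]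
  conv_rhs => rw [mul_left_comm, ← Real.exp_add]
  congr 1
  field_simp
  ring

lemma gauss_pi_tail {n : ℕ} (ν : ℝ≥0) (hν : ν ≠ 0) (c : Fin n → ℝ) (t a : ℝ) (ht : 0 ≤ t)
    (ha : a = t * ν * ∑ i, c i ^ 2) :
    Measure.pi (fun _ : Fin n => gaussianReal 0 ν) {x | a < ∑ i, c i * x i}
      ≤ ENNReal.ofReal (Real.exp (-(t * a) / 2)) / 2 := by
  set G := Measure.pi (fun _ : Fin n => gaussianReal 0 ν) with hG
  have hprob : IsProbabilityMeasure G := by exact MeasureTheory.Measure.pi.instIsProbabilityMeasure _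
  set m : Fin n → ℝ := fun i => t * ν * c i with hm
  set L : (Fin n → ℝ) → ℝ := fun x => ∑ i, c i * x i with hL
  have hLmeas : Measurable L := Finset.measurable_sum _ fun i _ => (by fun_prop)
  have hE : MeasurableSet {x : Fin n → ℝ | a < L x} := measurableSet_lt measurable_const hLmeas
  have hE0 : MeasurableSet {x : Fin n → ℝ | 0 < L x} := measurableSet_lt measurable_const hLmeas
  have hE1 : MeasurableSet {x : Fin n → ℝ | L x < 0} := measurableSet_lt hLmeas measurable_const
  set K : ℝ≥0∞ := ENNReal.ofReal (Real.exp (-(t * a) / 2)) with hK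
  set Gm := Measure.pi (fun i => gaussianReal (m i) ν) with hGm
  have hcm : ∑ i, c i * m i = a := by
    rw [ha, Finset.mul_sum]
    refine Finset.sum_congr rfl fun i _ => ?_
    show c i * (t * ↑ν * c i) = t * ↑ν * c i ^ 2
    ring
  have hpoint : ∀ x ∈ {x : Fin n → ℝ | a < L x},
      (∏ i, gaussianPDF 0 ν (x i)) ≤ K * ∏ i, gaussianPDF (m i) ν (x i) := by
    intro x hx
    have hxE : a < L x := hx
    have hexp : ∏ i, gaussianPDFReal 0 ν (x i)
        = Real.exp (∑ i, ((m i)^2 - 2*(m i)*(x i))/(2*ν)) * ∏ i, gaussianPDFReal (m i) ν (x i) :=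
      calc ∏ i, gaussianPDFReal 0 ν (x i)
          = ∏ i, (Real.exp (((m i)^2 - 2*(m i)*(x i))/(2*ν)) * gaussianPDFReal (m i) ν (x i)) :=
            Finset.prod_congr rfl fun i _ => gaussianPDFReal_tilt ν hν (m i) (x i)
        _ = (∏ i, Real.exp (((m i)^2 - 2*(m i)*(x i))/(2*ν))) * ∏ i, gaussianPDFReal (m i) ν (x i) :=
            Finset.prod_mul_distrib
        _ = Real.exp (∑ i, ((m i)^2 - 2*(m i)*(x i))/(2*ν)) * ∏ i, gaussianPDFReal (m i) ν (x i) := by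
            rw [Real.exp_sum]
    have hνpos : (0:ℝ) < ν := lt_of_le_of_ne ν.2 (by exact_mod_cast hν.symm)
    have hsum : ∑ i, ((m i)^2 - 2*(m i)*(x i))/(2*ν) = t * a / 2 - t * L x := by
      have hterm : ∀ i, ((m i)^2 - 2*(m i)*(x i))/(2*ν)
          = t^2 * ↑ν * (c i ^ 2) / 2 - t * (c i * x i) := by
        intro i
        show ((t * ↑ν * c i)^2 - 2*(t * ↑ν * c i)*(x i))/(2*ν) = _
        field_simp
      calc ∑ i, ((m i)^2 - 2*(m i)*(x i))/(2*ν)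
          = ∑ i, (t^2 * ↑ν * (c i ^ 2) / 2 - t * (c i * x i)) :=
            Finset.sum_congr rfl fun i _ => hterm i
        _ = (∑ i, t^2 * ↑ν * (c i ^ 2)) / 2 - t * ∑ i, c i * x i := by
            rw [Finset.sum_sub_distrib, ← Finset.sum_div, ← Finset.mul_sum, ← Finset.mul_sum]
        _ = t * a / 2 - t * L x := by
            rw [← Finset.mul_sum, ha, hL]
            ring
    have hexple : ∑ i, ((m i)^2 - 2*(m i)*(x i))/(2*ν) ≤ -(t*a)/2 := by
      rw [hsum]
      have : t * a ≤ t * L x := mul_le_mul_of_nonneg_left hxE.le ht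
      linarith
    have hreal : ∏ i, gaussianPDFReal 0 ν (x i)
        ≤ Real.exp (-(t*a)/2) * ∏ i, gaussianPDFReal (m i) ν (x i) := by
      rw [hexp]
      exact mul_le_mul_of_nonneg_right (Real.exp_le_exp.2 hexple)
        (Finset.prod_nonneg fun i _ => gaussianPDFReal_nonneg _ _ _)
    calc ∏ i, gaussianPDF 0 ν (x i)
        = ENNReal.ofReal (∏ i, gaussianPDFReal 0 ν (x i)) := by
          rw [ENNReal.ofReal_prod_of_nonneg fun i _ => gaussianPDFReal_nonneg _ _ _]
          rfl
      _ ≤ ENNReal.ofReal (Real.exp (-(t*a)/2) * ∏ i, gaussianPDFReal (m i) ν (x i)) :=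
          ENNReal.ofReal_le_ofReal hreal
      _ = K * ∏ i, gaussianPDF (m i) ν (x i) := by
          rw [ENNReal.ofReal_mul (Real.exp_nonneg _),
            ENNReal.ofReal_prod_of_nonneg fun i _ => gaussianPDFReal_nonneg _ _ _]
          rfl
  have hmeasPDF : Measurable fun x : Fin n → ℝ => ∏ i, gaussianPDF (m i) ν (x i) :=
    Finset.measurable_prod _ fun i _ => (measurable_gaussianPDF _ _).comp (measurable_pi_apply i)
  have step1 : G {x | a < L x} ≤ K * Gm {x | a < L x} := by
    have h0 : G {x | a < L x}
        = ∫⁻ x in {x | a < L x}, ∏ i, gaussianPDF ((fun _ => (0:ℝ)) i) ν (x i)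
            ∂(Measure.pi fun _ : Fin n => (volume : Measure ℝ)) := by
      rw [hG, show (fun _ : Fin n => gaussianReal 0 ν) = (fun i => gaussianReal ((fun _ => (0:ℝ)) i) ν) from rfl,
        pi_gauss_eq _ _ hν, withDensity_apply _ hE]
    have h1 : Gm {x | a < L x}
        = ∫⁻ x in {x | a < L x}, ∏ i, gaussianPDF (m i) ν (x i)
            ∂(Measure.pi fun _ : Fin n => (volume : Measure ℝ)) := by
      rw [hGm, pi_gauss_eq _ _ hν, withDensity_apply _ hE]
    rw [h0, h1, ← lintegral_const_mul K hmeasPDF]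
    exact setLIntegral_mono (by fun_prop) hpoint
  have hmp : MeasurePreserving (fun x (i : Fin n) => x i + m i) G Gm := by
    refine measurePreserving_pi _ _ (f := fun i => (· + m i)) fun i => ⟨by fun_prop, ?_⟩
    rw [gaussianReal_map_add_const, zero_add]
  have hpre : (fun x (i : Fin n) => x i + m i) ⁻¹' {x | a < L x} = {x | 0 < L x} := by
    ext x
    simp only [Set.mem_preimage, Set.mem_setOf_eq, hL]
    have : ∑ i, c i * (x i + m i) = (∑ i, c i * x i) + a := by
      rw [← hcm, ← Finset.sum_add_distrib]
      exact Finset.sum_congr rfl fun i _ => by ring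
    rw [this, lt_add_iff_pos_left]
  have step2 : Gm {x | a < L x} = G {x | 0 < L x} := by
    rw [← hmp.measure_preimage hE.nullMeasurableSet, hpre]
  have hneg : MeasurePreserving (fun x (i : Fin n) => -(x i)) G G := by
    refine measurePreserving_pi _ _ fun i => ⟨measurable_neg, ?_⟩
    have h := gaussianReal_map_const_mul (μ := 0) (v := ν) (-1)
    have h2 : (⟨(-1:ℝ)^2, sq_nonneg _⟩ : ℝ≥0) = 1 := by ext; norm_num
    replace h : Measure.map (fun x : ℝ => -1 * x) (gaussianReal 0 ν) = gaussianReal 0 ν := by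
      rw [h, mul_zero]; congr 1; ext; simp
    rw [show (Neg.neg : ℝ → ℝ) = (fun z : ℝ => (-1) * z) from funext fun z => by ring, h]
  have hpre2 : (fun x (i : Fin n) => -(x i)) ⁻¹' {x | 0 < L x} = {x | L x < 0} := by
    ext x
    simp only [Set.mem_preimage, Set.mem_setOf_eq, hL]
    have : ∑ i, c i * (-(x i)) = -∑ i, c i * x i := by
      rw [← Finset.sum_neg_distrib]
      exact Finset.sum_congr rfl fun i _ => by ring
    rw [this]
    constructor <;> intro h <;> linarith
  have step3 : G {x | 0 < L x} ≤ 1/2 := by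
    have hsymm : G {x | 0 < L x} = G {x | L x < 0} := by
      rw [← hneg.measure_preimage hE0.nullMeasurableSet, hpre2]
    have hd : Disjoint {x : Fin n → ℝ | 0 < L x} {x | L x < 0} := by
      rw [Set.disjoint_left]
      intro x h1 h2
      simp only [Set.mem_setOf_eq] at h1 h2
      linarith
    have hun : G {x | 0 < L x} + G {x | L x < 0} ≤ 1 := by
      rw [← measure_union hd hE1]
      exact prob_le_one
    rw [← hsymm] at hun
    rw [ENNReal.le_div_iff_mul_le (Or.inl two_ne_zero) (Or.inl ENNReal.ofNat_ne_top)]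
    rw [mul_two]
    exact hun
  calc G {x | a < L x} ≤ K * Gm {x | a < L x} := step1
    _ = K * G {x | 0 < L x} := by rw [step2]
    _ ≤ K * (1/2) := mul_le_mul_right step3 K
    _ = K / 2 := by rw [mul_one_div]

lemma l1_nonneg {p : ℕ} (b : Fin p → ℝ) : 0 ≤ l1 b :=
  Finset.sum_nonneg fun _ _ => abs_nonneg _

lemma l2sq_nonneg {n : ℕ} (v : Fin n → ℝ) : 0 ≤ l2sq v :=
  Finset.sum_nonneg fun _ _ => sq_nonneg _

lemma l1_sub_le {p : ℕ} (b b' : Fin p → ℝ) : l1 (b - b') ≤ l1 b + l1 b' := by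
  rw [l1, l1, l1, ← Finset.sum_add_distrib]
  exact Finset.sum_le_sum fun j _ => abs_sub (b j) (b' j)

lemma det_bound {n p : ℕ} (hn : 0 < n) (X : Matrix (Fin n) (Fin p) ℝ)
    (e : Fin n → ℝ) (βs b : Fin p → ℝ) (lam : ℝ) (hlam : 0 < lam)
    (hA : ∀ j, |∑ i, X i j * e i| ≤ n * lam / 2)
    (hbasic : (1/n) * l2sq (X.mulVec βs + e - X.mulVec b) + 2*lam * l1 b
        ≤ (1/n) * l2sq (X.mulVec βs + e - X.mulVec βs) + 2*lam * l1 βs) :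
    |(1/n) * l2sq (X.mulVec βs + e - X.mulVec b) - (1/n) * l2sq e| ≤ 4 * lam * l1 βs := by
  have hn' : (0:ℝ) < n := by exact_mod_cast hn
  set r : Fin p → ℝ := b - βs with hr
  have hres : X.mulVec βs + e - X.mulVec b = e - X.mulVec r := by
    rw [hr, Matrix.mulVec_sub]
    abel
  set T : ℝ := ∑ i, e i * X.mulVec r i with hT
  have hexp : l2sq (e - X.mulVec r) = l2sq e - 2 * T + l2sq (X.mulVec r) := by
    rw [l2sq, l2sq, l2sq, hT, Finset.mul_sum, ← Finset.sum_sub_distrib, ← Finset.sum_add_distrib]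
    refine Finset.sum_congr rfl fun i _ => ?_
    simp only [Pi.sub_apply]
    ring
  have hTj : T = ∑ j, r j * ∑ i, X i j * e i := by
    rw [hT]
    simp only [Matrix.mulVec, dotProduct]
    calc ∑ i, e i * ∑ j, X i j * r j
        = ∑ i, ∑ j, e i * (X i j * r j) := by
          refine Finset.sum_congr rfl fun i _ => by rw [Finset.mul_sum]
      _ = ∑ j, ∑ i, e i * (X i j * r j) := Finset.sum_comm
      _ = ∑ j, r j * ∑ i, X i j * e i := by
          refine Finset.sum_congr rfl fun j _ => ?_
          rw [Finset.mul_sum]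
          refine Finset.sum_congr rfl fun i _ => by ring
  have hTbound : |T| ≤ n * lam / 2 * l1 r := by
    rw [hTj, l1, Finset.mul_sum]
    refine (Finset.abs_sum_le_sum_abs _ _).trans (Finset.sum_le_sum fun j _ => ?_)
    rw [abs_mul]
    calc |r j| * |∑ i, X i j * e i| ≤ |r j| * (n * lam / 2) :=
          mul_le_mul_of_nonneg_left (hA j) (abs_nonneg _)
      _ = n * lam / 2 * |r j| := by ring
  set D : ℝ := (1/n) * l2sq (e - X.mulVec r) - (1/n) * l2sq e with hD
  have hDlow : -(lam * l1 r) ≤ D := by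
    have h1 : D = (1/n) * (l2sq (X.mulVec r) - 2 * T) := by
      rw [hD, hexp]; ring
    have h2 : -(n * lam / 2 * l1 r) ≤ T ∧ T ≤ n * lam / 2 * l1 r := abs_le.1 hTbound
    have h3 : 0 ≤ l2sq (X.mulVec r) := l2sq_nonneg _
    rw [h1]
    have key : 1/(n:ℝ) * (l2sq (X.mulVec r) - 2*T) + lam * l1 r
        = (1/n) * l2sq (X.mulVec r) + (2/n) * (n * lam / 2 * l1 r - T) := by
      field_simp
      ring
    have h4 : 0 ≤ (2/(n:ℝ)) * (n * lam / 2 * l1 r - T) :=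
      mul_nonneg (by positivity) (sub_nonneg.2 h2.2)
    have h5 : 0 ≤ (1/(n:ℝ)) * l2sq (X.mulVec r) := mul_nonneg (by positivity) h3
    linarith
  have he : X.mulVec βs + e - X.mulVec βs = e := by abel
  have hbasic' : D + 2*lam*l1 b ≤ 2*lam*l1 βs := by
    rw [hres, he] at hbasic
    rw [hD]
    linarith
  have htri : l1 r ≤ l1 b + l1 βs := by rw [hr]; exact l1_sub_le b βs
  have hQ : lam * l1 r ≤ lam * l1 b + lam * l1 βs := by
    calc lam * l1 r ≤ lam * (l1 b + l1 βs) := mul_le_mul_of_nonneg_left htri hlam.le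
      _ = _ := by ring
  have hP1 : 0 ≤ lam * l1 b := mul_nonneg hlam.le (l1_nonneg b)
  have hP2 : 0 ≤ lam * l1 βs := mul_nonneg hlam.le (l1_nonneg βs)
  rw [hres, ← hD, abs_le]
  constructor <;> linarith

lemma map_eps_eq_pi {Ω : Type} [MeasureSpace Ω] [IsProbabilityMeasure (ℙ : Measure Ω)]
    {n : ℕ} (ν : ℝ≥0)
    (ε : Ω → Fin n → ℝ) (hmeas : ∀ i, Measurable fun ω => ε ω i)
    (hgauss : ∀ i, Measure.map (fun ω => ε ω i) ℙ = gaussianReal 0 ν)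
    (hindep : iIndepFun (fun i ω => ε ω i) ℙ) :
    Measure.map (fun ω => ε ω) ℙ = Measure.pi (fun _ : Fin n => gaussianReal 0 ν) := by
  have hε : Measurable (fun ω => ε ω) := measurable_pi_iff.2 hmeas
  refine (Measure.pi_eq fun s hs => ?_).symm
  rw [Measure.map_apply hε (MeasurableSet.univ_pi hs)]
  have hset : (fun ω => ε ω) ⁻¹' (Set.pi Set.univ s)
      = ⋂ i ∈ Finset.univ, (fun ω => ε ω i) ⁻¹' (s i) := by
    ext ω
    simp [Set.mem_pi]
  rw [hset, hindep.measure_inter_preimage_eq_mul Finset.univ (fun i _ => hs i)]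
  exact Finset.prod_congr rfl fun i _ => by rw [← hgauss i, Measure.map_apply (hmeas i) (hs i)]

/-- slow-rate high-probability bound for the naive estimator based on the
lasso with λ = 4σ√(log p / n). -/
theorem naive_lasso_slow_rate {n p : ℕ} (hn : 0 < n) (hp : 2 ≤ p)
    (X : Matrix (Fin n) (Fin p) ℝ) (hX : ∀ j, ∑ i, (X i j)^2 = (n : ℝ))
    (σ : ℝ) (hσ : 0 < σ)
    {Ω : Type} [MeasureSpace Ω] [IsProbabilityMeasure (ℙ : Measure Ω)]
    (ε : Ω → Fin n → ℝ)
    (hmeas : ∀ i, Measurable (fun ω => ε ω i))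
    (hgauss : ∀ i, Measure.map (fun ω => ε ω i) ℙ = gaussianReal 0 ⟨σ^2, sq_nonneg σ⟩)
    (hindep : iIndepFun (fun i ω => ε ω i) ℙ)
    (βstar : Fin p → ℝ) (y : Ω → Fin n → ℝ)
    (hy : ∀ ω, y ω = X.mulVec βstar + ε ω)
    (lam : ℝ) (hlam : lam = 4 * σ * Real.sqrt (Real.log p / n))
    (βhat : Ω → Fin p → ℝ)
    (hβhat : ∀ ω (β : Fin p → ℝ),
      (1/n) * l2sq (y ω - X.mulVec (βhat ω)) + 2*lam * l1 (βhat ω)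
        ≤ (1/n) * l2sq (y ω - X.mulVec β) + 2*lam * l1 β) :
    1 - 1/(p : ℝ≥0∞)
      ≤ ℙ {ω | |(1/n) * l2sq (y ω - X.mulVec (βhat ω)) - (1/n) * l2sq (ε ω)|
          ≤ 16 * σ * l1 βstar * Real.sqrt (Real.log p / n)} := by
  have hn' : (0:ℝ) < n := by exact_mod_cast hn
  have hp1 : (1:ℝ) < p := by exact_mod_cast lt_of_lt_of_le one_lt_two hp
  have hp0' : (0:ℝ) < p := lt_trans one_pos hp1
  have hlogp : 0 < Real.log p := Real.log_pos hp1
  have hlogdiv : 0 < Real.log p / n := div_pos hlogp hn'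
  have hsq : 0 < Real.sqrt (Real.log p / n) := Real.sqrt_pos.2 hlogdiv
  have hlam0 : 0 < lam := by rw [hlam]; positivity
  set ν : ℝ≥0 := ⟨σ^2, sq_nonneg σ⟩ with hνdef
  have hνre : (ν : ℝ) = σ^2 := rfl
  have hν0 : ν ≠ 0 := by
    rw [← NNReal.coe_ne_zero, hνre]
    positivity
  set t : ℝ := lam / (2*σ^2) with htdef
  have ht : 0 ≤ t := by positivity
  set a : ℝ := n * lam / 2 with hadef
  have hε : Measurable (fun ω => ε ω) := measurable_pi_iff.2 hmeas
  have hmap : Measure.map (fun ω => ε ω) ℙ = Measure.pi (fun _ : Fin n => gaussianReal 0 ν) :=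
    map_eps_eq_pi ν ε hmeas hgauss hindep
  have hlam2 : lam^2 = 16*σ^2*(Real.log p / n) := by
    rw [hlam, mul_pow, mul_pow, Real.sq_sqrt hlogdiv.le]
    norm_num
  have hexpo : -(t * a) / 2 = -(2 * Real.log p) := by
    rw [htdef, hadef]
    have : lam / (2*σ^2) * ((n:ℝ) * lam / 2) = n * lam^2 / (4*σ^2) := by
      field_simp
      ring
    rw [this, hlam2]
    field_simp
    ring
  -- per-direction tail bound
  have tail : ∀ (c : Fin n → ℝ), (∑ i, (c i)^2) = (n:ℝ) →
      ℙ {ω | a < ∑ i, c i * ε ω i} ≤ ENNReal.ofReal ((p:ℝ)⁻¹ * (p:ℝ)⁻¹) / 2 := by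
    intro c hc
    have hB : MeasurableSet {x : Fin n → ℝ | a < ∑ i, c i * x i} :=
      measurableSet_lt measurable_const
        (Finset.measurable_sum _ fun i _ => (by fun_prop))
    have heq : ℙ {ω | a < ∑ i, c i * ε ω i}
        = (Measure.pi fun _ : Fin n => gaussianReal 0 ν) {x | a < ∑ i, c i * x i} := by
      rw [← hmap, Measure.map_apply hε hB]
      rfl
    have ha' : a = t * ν * ∑ i, c i ^ 2 := by
      rw [hc, hadef, htdef, hνre]
      field_simp
    have hb := gauss_pi_tail ν hν0 c t a ht ha'
    rw [heq]
    refine hb.trans (le_of_eq ?_)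
    congr 1
    rw [hexpo]
    congr 1
    rw [show -(2 * Real.log p) = -Real.log p + -Real.log p by ring, Real.exp_add,
      Real.exp_neg, Real.exp_log hp0']
  -- bad events
  set S : Fin p → Ω → ℝ := fun j ω => ∑ i, X i j * ε ω i with hS
  have hSmeas : ∀ j, Measurable (S j) := fun j =>
    Finset.measurable_sum _ fun i _ => (hmeas i).const_mul _
  set badp : Fin p → Set Ω := fun j => {ω | a < S j ω} with hbadp
  set badm : Fin p → Set Ω := fun j => {ω | a < ∑ i, (-(X i j)) * ε ω i} with hbadm
  have hnegsum : ∀ j ω, ∑ i, (-(X i j)) * ε ω i = -(S j ω) := by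
    intro j ω
    rw [hS, ← Finset.sum_neg_distrib]
    exact Finset.sum_congr rfl fun i _ => by ring
  have hbadpmeas : ∀ j, MeasurableSet (badp j) := fun j =>
    measurableSet_lt measurable_const (hSmeas j)
  have hbadmmeas : ∀ j, MeasurableSet (badm j) := fun j =>
    measurableSet_lt measurable_const
      (Finset.measurable_sum _ fun i _ => (hmeas i).const_mul _)
  set bad : Set Ω := ⋃ j, (badp j ∪ badm j) with hbad
  have hbadmeas : MeasurableSet bad :=
    MeasurableSet.iUnion fun j => (hbadpmeas j).union (hbadmmeas j)
  have hXneg : ∀ j, (∑ i, (-(X i j))^2) = (n:ℝ) := by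
    intro j
    rw [← hX j]
    exact Finset.sum_congr rfl fun i _ => by ring
  have hbadbound : ℙ bad ≤ 1/(p : ℝ≥0∞) := by
    have h1 : ℙ bad ≤ ∑ j : Fin p, ℙ (badp j ∪ badm j) := by
      refine (measure_iUnion_le _).trans (le_of_eq ?_)
      exact tsum_fintype _
    have h2 : ∀ j : Fin p, ℙ (badp j ∪ badm j) ≤ ENNReal.ofReal ((p:ℝ)⁻¹ * (p:ℝ)⁻¹) := by
      intro j
      refine (measure_union_le _ _).trans ?_
      have hbp := tail (fun i => X i j) (hX j)
      have hbm := tail (fun i => -(X i j)) (hXneg j)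
      calc ℙ (badp j) + ℙ (badm j)
          ≤ ENNReal.ofReal ((p:ℝ)⁻¹ * (p:ℝ)⁻¹) / 2 + ENNReal.ofReal ((p:ℝ)⁻¹ * (p:ℝ)⁻¹) / 2 :=
            add_le_add hbp hbm
        _ = ENNReal.ofReal ((p:ℝ)⁻¹ * (p:ℝ)⁻¹) := ENNReal.add_halves _
    have h3 : ∑ j : Fin p, ℙ (badp j ∪ badm j)
        ≤ ∑ _j : Fin p, ENNReal.ofReal ((p:ℝ)⁻¹ * (p:ℝ)⁻¹) :=
      Finset.sum_le_sum fun j _ => h2 j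
    have h4 : (∑ _j : Fin p, ENNReal.ofReal ((p:ℝ)⁻¹ * (p:ℝ)⁻¹)) = 1/(p : ℝ≥0∞) := by
      rw [Finset.sum_const, Finset.card_univ, Fintype.card_fin, nsmul_eq_mul]
      rw [ENNReal.ofReal_mul (by positivity), ENNReal.ofReal_inv_of_pos hp0',
        ENNReal.ofReal_natCast]
      have hpne : (p : ℝ≥0∞) ≠ 0 := by
        simp only [ne_eq, Nat.cast_eq_zero]
        omega
      have hptop : (p : ℝ≥0∞) ≠ ⊤ := ENNReal.natCast_ne_top p
      rw [← mul_assoc, ENNReal.mul_inv_cancel hpne hptop, one_mul, one_div]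
    calc ℙ bad ≤ ∑ j : Fin p, ℙ (badp j ∪ badm j) := h1
      _ ≤ ∑ _j : Fin p, ENNReal.ofReal ((p:ℝ)⁻¹ * (p:ℝ)⁻¹) := h3
      _ = 1/(p : ℝ≥0∞) := h4
  -- good event inclusion
  have hsub : badᶜ ⊆ {ω | |(1/n) * l2sq (y ω - X.mulVec (βhat ω)) - (1/n) * l2sq (ε ω)|
      ≤ 16 * σ * l1 βstar * Real.sqrt (Real.log p / n)} := by
    intro ω hω
    simp only [hbad, Set.compl_iUnion, Set.mem_iInter, Set.mem_compl_iff, Set.mem_union,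
      not_or] at hω
    have hA : ∀ j, |∑ i, X i j * ε ω i| ≤ (n:ℝ) * lam / 2 := by
      intro j
      obtain ⟨h1, h2⟩ := hω j
      rw [hbadp] at h1
      rw [hbadm] at h2
      simp only [Set.mem_setOf_eq, not_lt] at h1 h2
      rw [hnegsum j ω] at h2
      rw [abs_le]
      constructor
      · rw [hS] at h2
        linarith
      · rw [hS] at h1
        exact h1
    have hbasic := hβhat ω βstar
    rw [hy ω] at hbasic
    have hdet := det_bound hn X (ε ω) βstar (βhat ω) lam hlam0 hA hbasic
    simp only [Set.mem_setOf_eq]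
    rw [hy ω]
    refine hdet.trans (le_of_eq ?_)
    rw [hlam]
    ring
  have hcompl : 1 - 1/(p : ℝ≥0∞) ≤ ℙ badᶜ := by
    rw [prob_compl_eq_one_sub hbadmeas]
    exact tsub_le_tsub_left hbadbound 1
  exact hcompl.trans (measure_mono hsub)
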